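/- If Z is a real random variable with E[|Z − E[Z]|^l] ≤ σ^l for some l > 1 and σ > 0, then Z is s-resilient for the function s(ε) = σ/(1 − ε)^{1/l}. -/

import Mathlib

open MeasureTheory ProbabilityTheory

section Defs

variable {Ω : Type*} [MeasureSpace Ω]

/-- Conditional expectation of `Z` given an event `A`: `E[Z·1_A] / Pr[A]`. -/
noncomputable def condMean (Z : Ω → ℝ) (A : Set Ω) : ℝ :=
  (∫ ω in A, Z ω) / (ℙ A).toReal

/-- `Z` is `s`-resilient from above: for every `ε ∈ [0,1)` and every measurable `B ⊆ ℝ`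
with `Pr[Z ∈ B] ≥ 1 − ε`, we have `E[Z | Z ∈ B] − E[Z] ≤ s(ε)`. -/
def ResilientAbove (Z : Ω → ℝ) (s : ℝ → ℝ) : Prop :=
  ∀ ε ∈ Set.Ico (0:ℝ) 1, ∀ B : Set ℝ, MeasurableSet B →
    1 - ε ≤ (ℙ (Z ⁻¹' B)).toReal →
    condMean Z (Z ⁻¹' B) - ∫ ω, Z ω ≤ s ε

/-- `Z` is `s`-resilient from below. -/
def ResilientBelow (Z : Ω → ℝ) (s : ℝ → ℝ) : Prop :=
  ∀ ε ∈ Set.Ico (0:ℝ) 1, ∀ B : Set ℝ, MeasurableSet B →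
    1 - ε ≤ (ℙ (Z ⁻¹' B)).toReal →
    (∫ ω, Z ω) - condMean Z (Z ⁻¹' B) ≤ s ε

/-- `Z` is `s`-resilient if it is `s`-resilient both from above and from below. -/
def Resilient (Z : Ω → ℝ) (s : ℝ → ℝ) : Prop :=
  ResilientAbove Z s ∧ ResilientBelow Z s

end Defs


lemma key_abs_bound {Ω : Type*} [MeasureSpace Ω] [IsProbabilityMeasure (ℙ : Measure Ω)]
    (Z : Ω → ℝ) (hZ : Integrable Z) (l σ : ℝ) (hl : 1 < l) (hσ : 0 < σ)
    (hint : Integrable (fun ω => |Z ω - ∫ ω', Z ω'| ^ l))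
    (hmom : (∫ ω, |Z ω - ∫ ω', Z ω'| ^ l) ≤ σ ^ l)
    {ε : ℝ} (hε : ε ∈ Set.Ico (0:ℝ) 1) (A : Set Ω)
    (hA : 1 - ε ≤ (ℙ A).toReal) :
    |(∫ ω in A, Z ω) / (ℙ A).toReal - ∫ ω, Z ω| ≤ σ / (1 - ε) ^ (1 / l) := by
  have hl0 : (0:ℝ) < l := by linarith
  set μ0 := ∫ ω, Z ω with hμ0
  set W : Ω → ℝ := fun ω => Z ω - μ0 with hW
  set p := (ℙ A).toReal with hpdef
  have h1ε : (0:ℝ) < 1 - ε := by linarith [hε.2]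
  have hp : 0 < p := lt_of_lt_of_le h1ε hA
  set q := l / (l - 1) with hq
  have hconj : l.HolderConjugate q := by
    exact (Real.holderConjugate_iff_eq_conjExponent hl).2 hq
  -- membership in Lp
  have hWmeas : AEStronglyMeasurable W ℙ := hZ.1.sub aestronglyMeasurable_const
  have hWlp : MemLp W (ENNReal.ofReal l) ℙ := by
    have hne0 : ENNReal.ofReal l ≠ 0 := by
      simp [ENNReal.ofReal_eq_zero, not_le, hl0]
    have hnetop : ENNReal.ofReal l ≠ ⊤ := ENNReal.ofReal_ne_top
    have := (memLp_norm_rpow_iff (p := ENNReal.ofReal l) hWmeas hne0 hnetop)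
    rw [ENNReal.div_self hne0 hnetop] at this
    refine this.1 ?_
    rw [memLp_one_iff_integrable]
    have : (fun x => ‖W x‖ ^ (ENNReal.ofReal l).toReal) = fun ω => |Z ω - μ0| ^ l := by
      funext x
      rw [ENNReal.toReal_ofReal hl0.le, Real.norm_eq_abs]
    rw [this]
    exact hint
  -- Hölder on the restricted measure
  have holder : ∫ ω in A, |W ω| ≤ (∫ ω in A, |W ω| ^ l) ^ (1/l) * (∫ ω in A, (1:ℝ) ^ q) ^ (1/q) := by
    have := integral_mul_le_Lp_mul_Lq_of_nonneg (μ := (ℙ : Measure Ω).restrict A) hconj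
      (f := fun ω => |W ω|) (g := fun _ => (1:ℝ))
      (Filter.Eventually.of_forall fun x => abs_nonneg _)
      (Filter.Eventually.of_forall fun x => zero_le_one)
      ?_ ?_
    · simpa using this
    · have := (hWlp.restrict A).norm
      simpa [Real.norm_eq_abs] using this
    · exact memLp_const 1
  have hone : (∫ ω in A, (1:ℝ) ^ q) = p := by
    simp [Real.one_rpow, hpdef, Measure.restrict_apply_univ, measureReal_def]
  set m := ∫ ω in A, |W ω| ^ l with hm
  have hm_nonneg : 0 ≤ m := integral_nonneg fun ω => Real.rpow_nonneg (abs_nonneg _) _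
  have hm_le : m ≤ σ ^ l := by
    refine le_trans (setIntegral_le_integral hint ?_) hmom
    exact Filter.Eventually.of_forall fun ω => Real.rpow_nonneg (abs_nonneg _) _
  have hml : m ^ (1/l) ≤ σ := by
    calc m ^ (1/l) ≤ (σ ^ l) ^ (1/l) := Real.rpow_le_rpow hm_nonneg hm_le (by positivity)
    _ = σ := by
        rw [← Real.rpow_mul hσ.le, mul_one_div, div_self hl0.ne', Real.rpow_one]
  -- integral identity
  have hWint : ∫ ω in A, W ω = (∫ ω in A, Z ω) - p * μ0 := by
    rw [hW]
    rw [integral_sub hZ.integrableOn (integrable_const μ0)]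
    simp [hpdef, Measure.restrict_apply_univ, mul_comm, measureReal_def]
  have hcm : (∫ ω in A, Z ω) / p - μ0 = (∫ ω in A, W ω) / p := by
    rw [hWint]
    field_simp
  have habs : |(∫ ω in A, Z ω) / p - μ0| ≤ (∫ ω in A, |W ω|) / p := by
    rw [hcm, abs_div, abs_of_pos hp]
    gcongr
    simpa [Real.norm_eq_abs] using norm_integral_le_integral_norm (μ := (ℙ : Measure Ω).restrict A) W
  have hq1 : 1/l + 1/q = 1 := by
    have := hconj.inv_add_inv_eq_one
    simpa [one_div] using this
  have hfinal : (∫ ω in A, |W ω|) / p ≤ σ / (1 - ε) ^ (1/l) := by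
    have holder' : ∫ ω in A, |W ω| ≤ m ^ (1/l) * p ^ (1/q) := by rw [hone] at holder; exact holder
    calc (∫ ω in A, |W ω|) / p ≤ (m ^ (1/l) * p ^ (1/q)) / p := by gcongr
    _ ≤ (σ * p ^ (1/q)) / p := by gcongr
    _ = σ * p ^ (1/q - 1) := by
          rw [Real.rpow_sub hp, Real.rpow_one, mul_div_assoc]
    _ = σ / p ^ (1/l) := by
          rw [show 1/q - 1 = -(1/l) by linarith, Real.rpow_neg hp.le]
          exact (div_eq_mul_inv σ _).symm
    _ ≤ σ / (1 - ε) ^ (1/l) := by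
          have h2 : (1 - ε) ^ (1/l) ≤ p ^ (1/l) := Real.rpow_le_rpow h1ε.le hA (by positivity)
          have h3 : (0:ℝ) < (1 - ε) ^ (1/l) := Real.rpow_pos_of_pos h1ε _
          gcongr
  exact le_trans habs hfinal


/-- **Lemma 2, part 2 (bounded moments imply resilience).**
If `Z` is a real random variable with `E[|Z − E[Z]|^l] ≤ σ^l` for some `l > 1` and `σ > 0`,
then `Z` is `s`-resilient for `s(ε) = σ / (1 − ε)^{1/l}`. -/
theorem bounded_moments_resilient
    {Ω : Type*} [MeasureSpace Ω] [IsProbabilityMeasure (ℙ : Measure Ω)]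
    (Z : Ω → ℝ) (hZ : Integrable Z) (l σ : ℝ) (hl : 1 < l) (hσ : 0 < σ)
    (hint : Integrable (fun ω => |Z ω - ∫ ω', Z ω'| ^ l))
    (hmom : (∫ ω, |Z ω - ∫ ω', Z ω'| ^ l) ≤ σ ^ l) :
    Resilient Z (fun ε => σ / (1 - ε) ^ (1 / l)) := by
  constructor
  · intro ε hε B _ hge
    have h := key_abs_bound Z hZ l σ hl hσ hint hmom hε (Z ⁻¹' B) hge
    exact le_trans (le_abs_self _) h
  · intro ε hε B _ hge
    have h := key_abs_bound Z hZ l σ hl hσ hint hmom hε (Z ⁻¹' B) hge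
    rw [abs_sub_comm] at h
    exact le_trans (le_abs_self _) h
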